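/- For all integers A, M, N, every natural number d, and every v ∈ {0,1,2,3}, one has the identity (over ℚ): Σ_{i=0}^{d} Σ_{j=0}^{d-i} Σ_{k=0}^{j} (-1)^{i+j} · 2^{d-j+k} · C(A-v, i) · C(d+3-v-i-j, d-i-j) · C(M, k) · C(N, j-k) = 2^d · P^{a,b}_d(0), where a = 3 - N - A - M and b = A + M - 4 - d. In particular, the left-hand side is independent of v ∈ {0,1,2,3}. -/

import Mathlib

open Finset

/-- Generalized binomial coefficient `C(x,n) = x(x-1)⋯(x-n+1)/n!` over `ℚ`. -/
def qchoose (x : ℚ) (n : ℕ) : ℚ :=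
  (∏ i ∈ Finset.range n, (x - i)) / (n.factorial : ℚ)

/-- Constant term of the Jacobi polynomial:
`P^{a,b}_d(0) = 2^{-d} Σ_{v=0}^{d} C(d+a,v) C(d+b,d-v) (-1)^{d-v}`. -/
def jacobiZero (a b : ℚ) (d : ℕ) : ℚ :=
  (1 / 2 : ℚ) ^ d *
    ∑ v ∈ Finset.range (d + 1),
      qchoose ((d : ℚ) + a) v * qchoose ((d : ℚ) + b) (d - v) * (-1 : ℚ) ^ (d - v)



lemma qchoose_zero (x : ℚ) : qchoose x 0 = 1 := by simp [qchoose]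

lemma prod_shift (x : ℚ) (n : ℕ) :
    ∏ i ∈ range (n+1), (x - i) = (∏ i ∈ range n, (x - 1 - i)) * x := by
  rw [Finset.prod_range_succ']
  congr 1
  · exact Finset.prod_congr rfl fun i _ => by push_cast; ring
  · simp

lemma qchoose_pascal (x : ℚ) (n : ℕ) :
    qchoose x (n+1) = qchoose (x-1) n + qchoose (x-1) (n+1) := by
  unfold qchoose
  rw [prod_shift, Finset.prod_range_succ, Nat.factorial_succ]
  have h0 : (n.factorial : ℚ) ≠ 0 := by exact_mod_cast n.factorial_ne_zero
  have h1 : ((n:ℚ) + 1) ≠ 0 := by positivity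
  push_cast
  field_simp
  ring

lemma qchoose_mul (x : ℚ) (n : ℕ) :
    ((n:ℚ)+1) * qchoose x (n+1) = x * qchoose (x-1) n := by
  unfold qchoose
  rw [prod_shift, Nat.factorial_succ]
  have h0 : (n.factorial : ℚ) ≠ 0 := by exact_mod_cast n.factorial_ne_zero
  have h1 : ((n:ℚ) + 1) ≠ 0 := by positivity
  push_cast
  field_simp

lemma prod_neg (n : ℕ) : ∀ x : ℚ,
    ∏ i ∈ range n, (x - i) = (-1)^n * ∏ i ∈ range n, ((n:ℚ) - 1 - x - i) := by
  induction n with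
  | zero => simp
  | succ n ih =>
    intro x
    rw [Finset.prod_range_succ, ih x, Finset.prod_range_succ']
    push_cast
    have : (∏ i ∈ range n, ((n:ℚ) + 1 - 1 - x - ((i:ℚ) + 1)))
        = ∏ i ∈ range n, ((n:ℚ) - 1 - x - i) :=
      Finset.prod_congr rfl fun i _ => by ring
    rw [this]
    ring

lemma qchoose_neg (x : ℚ) (n : ℕ) :
    qchoose x n = (-1)^n * qchoose ((n:ℚ) - 1 - x) n := by
  unfold qchoose
  rw [prod_neg n x]
  ring

lemma qchoose_zero_left (n : ℕ) : qchoose 0 (n+1) = 0 := by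
  unfold qchoose
  rw [Finset.prod_eq_zero (Finset.mem_range.mpr n.succ_pos) (by simp)]
  simp

lemma qvandermonde (n : ℕ) : ∀ x y : ℚ,
    ∑ i ∈ range (n+1), qchoose x i * qchoose y (n-i) = qchoose (x+y) n := by
  induction n with
  | zero => intro x y; simp [qchoose_zero]
  | succ n ih =>
    intro x y
    have hn : ((n:ℚ)+1) ≠ 0 := by positivity
    apply mul_left_cancel₀ hn
    have key : ((n:ℚ)+1) * ∑ i ∈ range (n+1+1), qchoose x i * qchoose y (n+1-i)
        = (∑ i ∈ range (n+1+1), (i:ℚ) * qchoose x i * qchoose y (n+1-i))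
        + (∑ i ∈ range (n+1+1), ((n+1-i : ℕ):ℚ) * qchoose x i * qchoose y (n+1-i)) := by
      rw [Finset.mul_sum, ← Finset.sum_add_distrib]
      refine Finset.sum_congr rfl fun i hi => ?_
      have hi' : i ≤ n + 1 := Nat.lt_succ_iff.mp (Finset.mem_range.mp hi)
      have h1 : ((n+1-i : ℕ):ℚ) = (n:ℚ) + 1 - (i:ℚ) := by
        rw [Nat.cast_sub hi']; push_cast; ring
      rw [h1]; ring
    rw [key]
    have first : (∑ i ∈ range (n+1+1), (i:ℚ) * qchoose x i * qchoose y (n+1-i))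
        = x * qchoose (x - 1 + y) n := by
      rw [Finset.sum_range_succ']
      have h2 : (∑ i ∈ range (n+1), ((i+1 : ℕ):ℚ) * qchoose x (i+1) * qchoose y (n+1-(i+1)))
          = ∑ i ∈ range (n+1), x * (qchoose (x-1) i * qchoose y (n-i)) := by
        refine Finset.sum_congr rfl fun i _ => ?_
        have h3 : ((i+1 : ℕ):ℚ) * qchoose x (i+1) = x * qchoose (x-1) i := by
          push_cast; exact qchoose_mul x i
        rw [Nat.succ_sub_succ, mul_assoc, ← mul_assoc, h3]; ring
      rw [h2, ← Finset.mul_sum, ih (x-1) y]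
      simp
    have second : (∑ i ∈ range (n+1+1), ((n+1-i : ℕ):ℚ) * qchoose x i * qchoose y (n+1-i))
        = y * qchoose (x + (y - 1)) n := by
      rw [Finset.sum_range_succ]
      have h4 : (∑ i ∈ range (n+1), ((n+1-i : ℕ):ℚ) * qchoose x i * qchoose y (n+1-i))
          = ∑ i ∈ range (n+1), y * (qchoose x i * qchoose (y-1) (n-i)) := by
        refine Finset.sum_congr rfl fun i hi => ?_
        have hi' : i ≤ n := Nat.lt_succ_iff.mp (Finset.mem_range.mp hi)
        have h5 : n + 1 - i = (n - i) + 1 := by omega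
        rw [h5]
        push_cast
        rw [show (((n-i : ℕ):ℚ) + 1) * qchoose x i * qchoose y (n-i+1)
            = qchoose x i * ((((n-i : ℕ):ℚ)+1) * qchoose y (n-i+1)) from by ring,
          qchoose_mul y (n-i)]
        ring
      rw [h4, ← Finset.mul_sum, ih x (y-1)]
      simp
    rw [first, second]
    have := qchoose_mul (x+y) n
    have hxy : x - 1 + y = x + y - 1 := by ring
    have hxy2 : x + (y-1) = x + y - 1 := by ring
    rw [hxy, hxy2]
    rw [this]  -- goal: x * q + y * q = (x+y)*q(x+y-1)
    ring

noncomputable def Lf (d : ℕ) (x y : ℚ) : ℚ :=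
  ∑ q ∈ range (d+1), (-1)^q * (-2)^(d-q) * qchoose x q * qchoose y (d-q)

noncomputable def Rf (d : ℕ) (x y : ℚ) : ℚ :=
  ∑ u ∈ range (d+1), qchoose ((d:ℚ)-1-x-y) u * (-1:ℚ)^(d-u) * qchoose y (d-u)

lemma Lf_rec (d : ℕ) (x y : ℚ) :
    Lf (d+1) x y = Lf (d+1) x (y-1) - 2 * Lf d x (y-1) := by
  unfold Lf
  rw [Finset.sum_range_succ, Finset.sum_range_succ (n := d+1)
    (f := fun q => (-1:ℚ)^q * (-2)^(d+1-q) * qchoose x q * qchoose (y-1) (d+1-q))]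
  have split : (∑ q ∈ range (d+1), (-1:ℚ)^q * (-2)^(d+1-q) * qchoose x q * qchoose y (d+1-q))
      = (∑ q ∈ range (d+1), (-1:ℚ)^q * (-2)^(d+1-q) * qchoose x q * qchoose (y-1) (d+1-q))
      + (∑ q ∈ range (d+1), (-1:ℚ)^q * (-2)^(d+1-q) * qchoose x q * qchoose (y-1) (d-q)) := by
    rw [← Finset.sum_add_distrib]
    refine Finset.sum_congr rfl fun q hq => ?_
    have hq' : q ≤ d := Nat.lt_succ_iff.mp (Finset.mem_range.mp hq)
    have h1 : d + 1 - q = (d - q) + 1 := by omega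
    rw [h1, qchoose_pascal y (d-q)]
    ring
  rw [split]
  have last : (∑ q ∈ range (d+1), (-1:ℚ)^q * (-2)^(d+1-q) * qchoose x q * qchoose (y-1) (d-q))
      = -2 * ∑ q ∈ range (d+1), (-1:ℚ)^q * (-2)^(d-q) * qchoose x q * qchoose (y-1) (d-q) := by
    rw [Finset.mul_sum]
    refine Finset.sum_congr rfl fun q hq => ?_
    have hq' : q ≤ d := Nat.lt_succ_iff.mp (Finset.mem_range.mp hq)
    have h1 : d + 1 - q = (d - q) + 1 := by omega
    rw [h1, pow_succ]
    ring
  rw [last]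
  simp only [Nat.sub_self, qchoose_zero]
  ring

lemma Rf_aux (d : ℕ) (c y : ℚ) :
    ∑ u ∈ range (d+2), qchoose c u * (-1:ℚ)^(d+1-u) * qchoose y (d+1-u)
    = (∑ u ∈ range (d+2), qchoose (c+1) u * (-1:ℚ)^(d+1-u) * qchoose (y-1) (d+1-u))
      - 2 * ∑ u ∈ range (d+1), qchoose c u * (-1:ℚ)^(d-u) * qchoose (y-1) (d-u) := by
  set Rfd := ∑ u ∈ range (d+1), qchoose c u * (-1:ℚ)^(d-u) * qchoose (y-1) (d-u) with hRfd
  set S2 := ∑ u ∈ range (d+2), qchoose c u * (-1:ℚ)^(d+1-u) * qchoose (y-1) (d+1-u) with hS2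
  have step1 : ∑ u ∈ range (d+2), qchoose c u * (-1:ℚ)^(d+1-u) * qchoose y (d+1-u)
      = S2 - Rfd := by
    rw [hS2, hRfd, Finset.sum_range_succ, Finset.sum_range_succ (n := d+1)
      (f := fun u => qchoose c u * (-1:ℚ)^(d+1-u) * qchoose (y-1) (d+1-u))]
    have split : (∑ u ∈ range (d+1), qchoose c u * (-1:ℚ)^(d+1-u) * qchoose y (d+1-u))
        = (∑ u ∈ range (d+1), qchoose c u * (-1:ℚ)^(d+1-u) * qchoose (y-1) (d+1-u))
        - (∑ u ∈ range (d+1), qchoose c u * (-1:ℚ)^(d-u) * qchoose (y-1) (d-u)) := by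
      rw [← Finset.sum_sub_distrib]
      refine Finset.sum_congr rfl fun u hu => ?_
      have hu' : u ≤ d := Nat.lt_succ_iff.mp (Finset.mem_range.mp hu)
      have h1 : d + 1 - u = (d - u) + 1 := by omega
      rw [h1, qchoose_pascal y (d-u), pow_succ]
      ring
    rw [split]
    simp only [Nat.sub_self, qchoose_zero]
    ring
  have step2 : (∑ u ∈ range (d+2), qchoose (c+1) u * (-1:ℚ)^(d+1-u) * qchoose (y-1) (d+1-u))
      = S2 + Rfd := by
    rw [hS2, hRfd, Finset.sum_range_succ', Finset.sum_range_succ' (n := d+1)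
      (f := fun u => qchoose c u * (-1:ℚ)^(d+1-u) * qchoose (y-1) (d+1-u))]
    have split : (∑ u ∈ range (d+1), qchoose (c+1) (u+1) * (-1:ℚ)^(d+1-(u+1)) * qchoose (y-1) (d+1-(u+1)))
        = (∑ u ∈ range (d+1), qchoose c (u+1) * (-1:ℚ)^(d+1-(u+1)) * qchoose (y-1) (d+1-(u+1)))
        + (∑ u ∈ range (d+1), qchoose c u * (-1:ℚ)^(d-u) * qchoose (y-1) (d-u)) := by
      rw [← Finset.sum_add_distrib]
      refine Finset.sum_congr rfl fun u hu => ?_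
      have h1 : d + 1 - (u+1) = d - u := by omega
      rw [h1, show qchoose (c+1) (u+1) = qchoose ((c+1)-1) u + qchoose ((c+1)-1) (u+1)
          from qchoose_pascal (c+1) u, show (c+1)-1 = c from by ring]
      ring
    rw [split]
    simp only [qchoose_zero]
    ring
  rw [step1, step2]
  ring

lemma Rf_rec (d : ℕ) (x y : ℚ) :
    Rf (d+1) x y = Rf (d+1) x (y-1) - 2 * Rf d x (y-1) := by
  have h := Rf_aux d ((d:ℚ) - x - y) y
  unfold Rf
  have e1 : ((d+1:ℕ):ℚ) - 1 - x - y = (d:ℚ) - x - y := by push_cast; ring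
  have e2 : ((d+1:ℕ):ℚ) - 1 - x - (y-1) = ((d:ℚ) - x - y) + 1 := by push_cast; ring
  have e3 : ((d:ℕ):ℚ) - 1 - x - (y-1) = (d:ℚ) - x - y := by push_cast; ring
  rw [e1, e2, e3]
  exact h

lemma Lf_anchor (d : ℕ) (x : ℚ) : Lf d x 0 = (-1)^d * qchoose x d := by
  unfold Lf
  rw [Finset.sum_eq_single_of_mem d (Finset.self_mem_range_succ d)]
  · simp [qchoose_zero]
  · intro q hq hne
    have hq' : q < d := by
      have := Nat.lt_succ_iff.mp (Finset.mem_range.mp hq); omega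
    obtain ⟨k, hk⟩ : ∃ k, d - q = k + 1 := ⟨d - q - 1, by omega⟩
    rw [hk, qchoose_zero_left]
    ring

lemma Rf_anchor (d : ℕ) (x : ℚ) : Rf d x 0 = (-1)^d * qchoose x d := by
  unfold Rf
  rw [Finset.sum_eq_single_of_mem d (Finset.self_mem_range_succ d)]
  · simp only [Nat.sub_self, pow_zero, qchoose_zero, mul_one, sub_zero]
    rw [qchoose_neg x d, ← mul_assoc, ← pow_add, Even.neg_one_pow ⟨d, by ring⟩, one_mul]
  · intro q hq hne
    have hq' : q < d := by
      have := Nat.lt_succ_iff.mp (Finset.mem_range.mp hq); omega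
    obtain ⟨k, hk⟩ : ∃ k, d - q = k + 1 := ⟨d - q - 1, by omega⟩
    rw [hk, qchoose_zero_left]
    ring

lemma LR (d : ℕ) : ∀ (x : ℚ) (y : ℤ), Lf d x (y:ℚ) = Rf d x (y:ℚ) := by
  induction d with
  | zero =>
    intro x y
    unfold Lf Rf
    simp [qchoose_zero]
  | succ d ih =>
    intro x y
    induction y using Int.induction_on with
    | zero => push_cast; rw [Lf_anchor, Rf_anchor]
    | succ k hk =>
      have hL := Lf_rec d x ((k:ℚ)+1)
      have hR := Rf_rec d x ((k:ℚ)+1)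
      rw [show ((k:ℚ)+1) - 1 = ((k:ℤ):ℚ) from by push_cast; ring] at hL hR
      push_cast
      rw [hL, hR, hk, ih x (k:ℤ)]
    | pred k hk =>
      have hL := Lf_rec d x (-(k:ℚ))
      have hR := Rf_rec d x (-(k:ℚ))
      have e : -(k:ℚ) - 1 = ((-(k:ℤ) - 1 : ℤ):ℚ) := by push_cast; ring
      rw [e] at hL hR
      have hih := ih x (-(k:ℤ) - 1)
      push_cast at hk hL hR hih ⊢
      linarith [hL, hR, hk, hih]

lemma sum_ite_range {n : ℕ} (i : ℕ) (hi : i ≤ n) (f : ℕ → ℚ) :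
    ∑ j ∈ range (n - i + 1), f j = ∑ j ∈ range (n+1), if i + j ≤ n then f j else 0 := by
  have h1 : ∑ j ∈ range (n-i+1), f j
      = ∑ j ∈ range (n-i+1), (if i + j ≤ n then f j else 0) :=
    Finset.sum_congr rfl fun j hj => by
      rw [if_pos (by have := Finset.mem_range.mp hj; omega)]
  rw [h1]
  apply Finset.sum_subset
  · intro j hj; exact Finset.mem_range.mpr (by have := Finset.mem_range.mp hj; omega)
  · intro j hj hnj
    rw [if_neg ?_]
    intro h
    exact hnj (Finset.mem_range.mpr (by omega))

lemma tri_nf (n : ℕ) (f : ℕ → ℕ → ℚ) :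
    ∑ i ∈ range (n+1), ∑ j ∈ range (n - i + 1), f i j
    = ∑ i ∈ range (n+1), ∑ j ∈ range (n+1), if i + j ≤ n then f i j else 0 :=
  Finset.sum_congr rfl fun i hi =>
    sum_ite_range i (Nat.lt_succ_iff.mp (Finset.mem_range.mp hi)) (f i)

lemma tri_swap (n : ℕ) (f : ℕ → ℕ → ℚ) :
    ∑ i ∈ range (n+1), ∑ j ∈ range (n - i + 1), f i j
    = ∑ j ∈ range (n+1), ∑ i ∈ range (n - j + 1), f i j := by
  rw [tri_nf n f, tri_nf n (fun j i => f i j), Finset.sum_comm]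
  exact Finset.sum_congr rfl fun j _ => Finset.sum_congr rfl fun i _ => by
    rw [Nat.add_comm]

lemma tri_reindex (n : ℕ) (g : ℕ → ℕ → ℚ) :
    ∑ j ∈ range (n+1), ∑ k ∈ range (j + 1), g j k
    = ∑ q ∈ range (n+1), ∑ k ∈ range (n - q + 1), g (q+k) k := by
  have lhs_nf : ∑ j ∈ range (n+1), ∑ k ∈ range (j + 1), g j k
      = ∑ p ∈ (range (n+1) ×ˢ range (n+1)).filter (fun p => p.2 ≤ p.1), g p.1 p.2 := by
    rw [Finset.sum_filter, Finset.sum_product]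
    refine Finset.sum_congr rfl fun j hj => ?_
    have hj' : j ≤ n := Nat.lt_succ_iff.mp (Finset.mem_range.mp hj)
    have h1 : ∑ k ∈ range (j+1), g j k = ∑ k ∈ range (j+1), (if k ≤ j then g j k else 0) :=
      Finset.sum_congr rfl fun k hk => by
        rw [if_pos (Nat.lt_succ_iff.mp (Finset.mem_range.mp hk))]
    rw [h1]
    apply Finset.sum_subset
    · intro k hk; exact Finset.mem_range.mpr (by have := Finset.mem_range.mp hk; omega)
    · intro k hk hnk
      rw [if_neg ?_]
      intro h
      exact hnk (Finset.mem_range.mpr (by omega))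
  have rhs_nf : ∑ q ∈ range (n+1), ∑ k ∈ range (n - q + 1), g (q+k) k
      = ∑ p ∈ (range (n+1) ×ˢ range (n+1)).filter (fun p => p.1 + p.2 ≤ n),
          g (p.1 + p.2) p.2 := by
    rw [Finset.sum_filter, Finset.sum_product]
    exact Finset.sum_congr rfl fun q hq =>
      sum_ite_range q (Nat.lt_succ_iff.mp (Finset.mem_range.mp hq))
        (fun k => g (q+k) k)
  rw [lhs_nf, rhs_nf]
  refine Finset.sum_nbij' (fun p => (p.1 - p.2, p.2)) (fun p => (p.1 + p.2, p.2)) ?_ ?_ ?_ ?_ ?_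
  all_goals intro p hp
  all_goals simp only [Finset.mem_filter, Finset.mem_product, Finset.mem_range, Prod.mk.injEq] at hp ⊢
  case _ => omega
  case _ => omega
  case _ => exact Prod.ext (by omega) rfl
  case _ => exact Prod.ext (by omega) rfl
  case _ => rw [show p.1 - p.2 + p.2 = p.1 by omega]


lemma inner_i (t : ℕ) (w z : ℚ) :
    ∑ i ∈ range (t+1), (-1:ℚ)^i * qchoose w i * qchoose ((t:ℚ) - (i:ℚ) + 3 - z) (t - i)
    = (-1:ℚ)^t * qchoose (w + z - 4) t := by
  have h : ∀ i ∈ range (t+1),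
      (-1:ℚ)^i * qchoose w i * qchoose ((t:ℚ) - (i:ℚ) + 3 - z) (t - i)
      = (-1:ℚ)^t * (qchoose w i * qchoose (z - 4) (t - i)) := by
    intro i hi
    have hi' : i ≤ t := Nat.lt_succ_iff.mp (Finset.mem_range.mp hi)
    have c1 : qchoose ((t:ℚ) - (i:ℚ) + 3 - z) (t - i)
        = (-1:ℚ)^(t-i) * qchoose (z - 4) (t - i) := by
      rw [qchoose_neg ((t:ℚ) - (i:ℚ) + 3 - z) (t - i),
        show (((t-i:ℕ)):ℚ) - 1 - ((t:ℚ) - (i:ℚ) + 3 - z) = z - 4 from by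
          rw [Nat.cast_sub hi']; ring]
    rw [c1, show (-1:ℚ)^i * qchoose w i * ((-1:ℚ)^(t-i) * qchoose (z-4) (t-i))
        = ((-1:ℚ)^i * (-1:ℚ)^(t-i)) * (qchoose w i * qchoose (z-4) (t-i)) from by ring,
      ← pow_add, show i + (t - i) = t from by omega]
  rw [Finset.sum_congr rfl h, ← Finset.mul_sum, qvandermonde t w (z-4),
    show w + (z-4) = w + z - 4 from by ring]

theorem combinatorial_factor_jacobi (A M N : ℤ) (d : ℕ) (v : ℕ) (hv : v ≤ 3) :
    ∑ i ∈ Finset.range (d + 1), ∑ j ∈ Finset.range (d - i + 1), ∑ k ∈ Finset.range (j + 1),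
        (-1 : ℚ) ^ (i + j) * 2 ^ (d - j + k) *
          qchoose ((A : ℚ) - (v : ℚ)) i *
          qchoose ((d : ℚ) + 3 - (v : ℚ) - (i : ℚ) - (j : ℚ)) (d - i - j) *
          qchoose (M : ℚ) k * qchoose (N : ℚ) (j - k)
      = 2 ^ d * jacobiZero (3 - (N : ℚ) - (A : ℚ) - (M : ℚ)) ((A : ℚ) + (M : ℚ) - 4 - (d : ℚ)) d := by
  have hRHS : (2:ℚ)^d * jacobiZero (3 - (N:ℚ) - (A:ℚ) - (M:ℚ)) ((A:ℚ) + (M:ℚ) - 4 - (d:ℚ)) d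
      = Rf d (N:ℚ) ((A:ℚ)+(M:ℚ)-4) := by
    unfold jacobiZero Rf
    rw [← mul_assoc, show ((2:ℚ)^d * (1/2:ℚ)^d) = 1 from by
      rw [← mul_pow]; norm_num, one_mul]
    refine Finset.sum_congr rfl fun u _ => ?_
    rw [show (d:ℚ) + (3 - (N:ℚ) - (A:ℚ) - (M:ℚ)) = (d:ℚ) - 1 - (N:ℚ) - ((A:ℚ)+(M:ℚ)-4) from by ring,
        show (d:ℚ) + ((A:ℚ)+(M:ℚ)-4-(d:ℚ)) = (A:ℚ)+(M:ℚ)-4 from by ring]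
    ring
  have hLR : Lf d (N:ℚ) ((A:ℚ)+(M:ℚ)-4) = Rf d (N:ℚ) ((A:ℚ)+(M:ℚ)-4) := by
    have h := LR d (N:ℚ) (A+M-4)
    push_cast at h
    exact h
  rw [hRHS, ← hLR]
  -- now reduce the LHS to Lf d N (A+M-4)
  rw [tri_swap d (fun i j => ∑ k ∈ Finset.range (j + 1),
        (-1 : ℚ) ^ (i + j) * 2 ^ (d - j + k) *
          qchoose ((A : ℚ) - (v : ℚ)) i *
          qchoose ((d : ℚ) + 3 - (v : ℚ) - (i : ℚ) - (j : ℚ)) (d - i - j) *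
          qchoose (M : ℚ) k * qchoose (N : ℚ) (j - k))]
  have step1 : ∀ j ∈ range (d+1),
      (∑ i ∈ Finset.range (d - j + 1), ∑ k ∈ Finset.range (j + 1),
        (-1 : ℚ) ^ (i + j) * 2 ^ (d - j + k) *
          qchoose ((A : ℚ) - (v : ℚ)) i *
          qchoose ((d : ℚ) + 3 - (v : ℚ) - (i : ℚ) - (j : ℚ)) (d - i - j) *
          qchoose (M : ℚ) k * qchoose (N : ℚ) (j - k))
      = ∑ k ∈ Finset.range (j + 1),
          (-1:ℚ)^j * 2^(d-j+k) * qchoose (M:ℚ) k * qchoose (N:ℚ) (j-k) *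
            ((-1:ℚ)^(d-j) * qchoose ((A:ℚ)-4) (d-j)) := by
    intro j hj
    have hj' : j ≤ d := Nat.lt_succ_iff.mp (Finset.mem_range.mp hj)
    rw [Finset.sum_comm]
    refine Finset.sum_congr rfl fun k _ => ?_
    have hbody : ∀ i ∈ Finset.range (d-j+1),
        (-1 : ℚ) ^ (i + j) * 2 ^ (d - j + k) *
          qchoose ((A : ℚ) - (v : ℚ)) i *
          qchoose ((d : ℚ) + 3 - (v : ℚ) - (i : ℚ) - (j : ℚ)) (d - i - j) *
          qchoose (M : ℚ) k * qchoose (N : ℚ) (j - k)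
        = ((-1:ℚ)^j * 2^(d-j+k) * qchoose (M:ℚ) k * qchoose (N:ℚ) (j-k)) *
            ((-1:ℚ)^i * qchoose ((A:ℚ)-(v:ℚ)) i *
              qchoose (((d-j:ℕ):ℚ) - (i:ℚ) + 3 - (v:ℚ)) ((d-j) - i)) := by
      intro i hi
      have hi' : i ≤ d - j := Nat.lt_succ_iff.mp (Finset.mem_range.mp hi)
      have c1 : (d:ℚ) + 3 - (v:ℚ) - (i:ℚ) - (j:ℚ)
          = ((d-j:ℕ):ℚ) - (i:ℚ) + 3 - (v:ℚ) := by
        rw [Nat.cast_sub hj']; ring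
      have c2 : d - i - j = (d - j) - i := by omega
      rw [c1, c2, pow_add]
      ring
    rw [Finset.sum_congr rfl hbody, ← Finset.mul_sum,
      inner_i (d-j) ((A:ℚ)-(v:ℚ)) (v:ℚ),
      show (A:ℚ)-(v:ℚ)+(v:ℚ)-4 = (A:ℚ)-4 from by ring]
  rw [Finset.sum_congr rfl step1]
  rw [tri_reindex d (fun j k =>
      (-1:ℚ)^j * 2^(d-j+k) * qchoose (M:ℚ) k * qchoose (N:ℚ) (j-k) *
        ((-1:ℚ)^(d-j) * qchoose ((A:ℚ)-4) (d-j)))]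
  have step2 : ∀ q ∈ range (d+1),
      (∑ k ∈ Finset.range (d - q + 1),
        (-1:ℚ)^(q+k) * 2^(d-(q+k)+k) * qchoose (M:ℚ) k * qchoose (N:ℚ) ((q+k)-k) *
          ((-1:ℚ)^(d-(q+k)) * qchoose ((A:ℚ)-4) (d-(q+k))))
      = (-1:ℚ)^q * (-2:ℚ)^(d-q) * qchoose (N:ℚ) q * qchoose ((A:ℚ)+(M:ℚ)-4) (d-q) := by
    intro q hq
    have hq' : q ≤ d := Nat.lt_succ_iff.mp (Finset.mem_range.mp hq)
    have hterm : ∀ k ∈ Finset.range (d-q+1),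
        (-1:ℚ)^(q+k) * 2^(d-(q+k)+k) * qchoose (M:ℚ) k * qchoose (N:ℚ) ((q+k)-k) *
          ((-1:ℚ)^(d-(q+k)) * qchoose ((A:ℚ)-4) (d-(q+k)))
        = ((-1:ℚ)^d * 2^(d-q) * qchoose (N:ℚ) q) *
            (qchoose (M:ℚ) k * qchoose ((A:ℚ)-4) ((d-q)-k)) := by
      intro k hk
      have hk' : k ≤ d - q := Nat.lt_succ_iff.mp (Finset.mem_range.mp hk)
      have c1 : (q+k) - k = q := by omega
      have c2 : d - (q+k) = (d-q) - k := by omega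
      have c3 : d - (q+k) + k = d - q := by omega
      have hsign : ((-1:ℚ))^(q+k) * ((-1:ℚ))^(d-(q+k)) = (-1:ℚ)^d := by
        rw [← pow_add]; congr 1; omega
      calc (-1:ℚ)^(q+k) * 2^(d-(q+k)+k) * qchoose (M:ℚ) k * qchoose (N:ℚ) ((q+k)-k) *
          ((-1:ℚ)^(d-(q+k)) * qchoose ((A:ℚ)-4) (d-(q+k)))
          = ((-1:ℚ)^(q+k) * (-1:ℚ)^(d-(q+k))) * 2^(d-(q+k)+k) * qchoose (M:ℚ) k *
              qchoose (N:ℚ) ((q+k)-k) * qchoose ((A:ℚ)-4) (d-(q+k)) := by ring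
        _ = ((-1:ℚ)^d * 2^(d-q) * qchoose (N:ℚ) q) *
            (qchoose (M:ℚ) k * qchoose ((A:ℚ)-4) ((d-q)-k)) := by
            rw [hsign, c1, c3, c2]; ring
    rw [Finset.sum_congr rfl hterm, ← Finset.mul_sum, qvandermonde (d-q) (M:ℚ) ((A:ℚ)-4),
      show (M:ℚ) + ((A:ℚ)-4) = (A:ℚ)+(M:ℚ)-4 from by ring]
    have hsign2 : (-1:ℚ)^q * (-2:ℚ)^(d-q) = (-1:ℚ)^d * 2^(d-q) := by
      rw [show ((-2:ℚ)) = (-1) * 2 from by norm_num, mul_pow, ← mul_assoc, ← pow_add,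
        show q + (d-q) = d from by omega]
    rw [← hsign2]
  rw [Finset.sum_congr rfl step2]
  rfl
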